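/- Let λ ∈ (0,1) and k ∈ (0,1). If the polynomial χ(x) = x² - ((1+λ)²k - 2λ)x + λ² has complex (non-real) roots, then both roots have modulus exactly λ. If χ has real roots μ₁ ≤ μ₂, then λ² < μ₁ ≤ μ₂ < 1. In either case all roots have modulus strictly less than 1. -/

import Mathlib

/-- Auxiliary: any real root of the polynomial lies in (l², 1). -/
lemma stmt_4_real_root (l k : ℝ) (hl : l ∈ Set.Ioo (0:ℝ) 1) (hk : k ∈ Set.Ioo (0:ℝ) 1)
    (μ : ℝ) (h : μ^2 - ((1 + l)^2 * k - 2 * l) * μ + l^2 = 0) :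
    l^2 < μ ∧ μ < 1 := by
  obtain ⟨hl0, hl1⟩ := hl
  obtain ⟨hk0, hk1⟩ := hk
  have hμpos : 0 < μ := by
    rcases lt_or_ge 0 μ with h'|h'
    · exact h'
    · exfalso
      rcases h'.lt_or_eq with hlt | heq
      · nlinarith [sq_nonneg (μ + l),
          mul_pos (mul_pos (pow_pos (by linarith : (0:ℝ) < 1 + l) 2) hk0) (neg_pos.2 hlt)]
      · subst heq; nlinarith
  -- b < 1 + l², so (μ-1)(μ-l²) < 0
  have key : (μ - 1) * (μ - l^2) < 0 := by
    nlinarith [mul_pos hμpos hl0, mul_lt_mul_of_pos_right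
      (show (1 + l)^2 * k - 2*l < 1 + l^2 by nlinarith [sq_nonneg (1+l), mul_pos hl0 hl0]) hμpos]
  have hl2 : l^2 < 1 := by nlinarith
  constructor
  · by_contra hc
    push_neg at hc
    have := mul_nonneg (by linarith : (0:ℝ) ≤ 1 - μ) (by linarith : (0:ℝ) ≤ l^2 - μ)
    nlinarith
  · by_contra hc
    push_neg at hc
    have := mul_nonneg (by linarith : (0:ℝ) ≤ μ - 1) (by linarith : (0:ℝ) ≤ μ - l^2)
    linarith

theorem stmt_4 (l k : ℝ) (hl : l ∈ Set.Ioo (0:ℝ) 1) (hk : k ∈ Set.Ioo (0:ℝ) 1) :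
    (∀ z : ℂ, z^2 - (((1 + l)^2 * k - 2 * l : ℝ) : ℂ) * z + ((l^2 : ℝ) : ℂ) = 0 →
      z.im ≠ 0 → ‖z‖ = l) ∧
    (∀ μ₁ μ₂ : ℝ,
      μ₁^2 - ((1 + l)^2 * k - 2 * l) * μ₁ + l^2 = 0 →
      μ₂^2 - ((1 + l)^2 * k - 2 * l) * μ₂ + l^2 = 0 →
      μ₁ ≤ μ₂ → l^2 < μ₁ ∧ μ₂ < 1) ∧
    (∀ z : ℂ, z^2 - (((1 + l)^2 * k - 2 * l : ℝ) : ℂ) * z + ((l^2 : ℝ) : ℂ) = 0 →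
      ‖z‖ < 1) := by
  obtain ⟨hl0, hl1⟩ := hl
  have habs : ∀ z : ℂ, z^2 - (((1 + l)^2 * k - 2 * l : ℝ) : ℂ) * z + ((l^2 : ℝ) : ℂ) = 0 →
      z.im ≠ 0 → ‖z‖ = l := by
    intro z hz hy
    set x := z.re with hx
    set y := z.im with hyy
    have hre : x^2 - y^2 - ((1 + l)^2 * k - 2 * l) * x + l^2 = 0 := by
      have := congrArg Complex.re hz
      simpa [pow_two, Complex.mul_re, Complex.mul_im, Complex.add_re, Complex.sub_re,
        Complex.ofReal_re, Complex.ofReal_im, ← hx, ← hyy, mul_comm] using this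
    have him : 2 * x * y - ((1 + l)^2 * k - 2 * l) * y = 0 := by
      have h' := congrArg Complex.im hz
      simp [pow_two, Complex.mul_re, Complex.mul_im, Complex.add_im, Complex.sub_im,
        Complex.ofReal_re, Complex.ofReal_im, ← hx, ← hyy] at h'
      linear_combination h' 
    have hb : (1 + l)^2 * k - 2 * l = 2 * x := by
      have : y * (2 * x - ((1 + l)^2 * k - 2 * l)) = 0 := by ring_nf; linarith [him]
      rcases mul_eq_zero.1 this with h'|h'
      · exact absurd h' hy
      · linarith
    have hsum : x^2 + y^2 = l^2 := by rw [hb] at hre; nlinarith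
    have h1 : ‖z‖ ^ 2 = l ^ 2 := by
      rw [Complex.sq_norm, Complex.normSq_apply, ← hx, ← hyy]; ring_nf; ring_nf at hsum; linarith
    nlinarith [norm_nonneg z]
  refine ⟨habs, ?_, ?_⟩
  · intro μ₁ μ₂ h1 h2 _
    exact ⟨(stmt_4_real_root l k ⟨hl0, hl1⟩ hk μ₁ h1).1,
           (stmt_4_real_root l k ⟨hl0, hl1⟩ hk μ₂ h2).2⟩
  · intro z hz
    rcases eq_or_ne z.im 0 with hy | hy
    · have hzr : z = ((z.re : ℝ) : ℂ) := by
        apply Complex.ext <;> simp [hy]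
      have hre : z.re^2 - ((1 + l)^2 * k - 2 * l) * z.re + l^2 = 0 := by
        rw [hzr] at hz
        have := congrArg Complex.re hz
        simpa [pow_two, Complex.mul_re, Complex.ofReal_re, Complex.ofReal_im] using this
      obtain ⟨hlo, hhi⟩ := stmt_4_real_root l k ⟨hl0, hl1⟩ hk z.re hre
      rw [hzr, Complex.norm_real, Real.norm_eq_abs, abs_of_pos (by nlinarith [sq_nonneg l])]
      exact hhi
    · rw [habs z hz hy]; exact hl1
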